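/- Let X be a real Banach space, and let b < η < a be real numbers and K₁, K₂ > 0. Let U(t), for t ≤ 0, and V(t), for t ≥ 0, be bounded linear operators on X with t ↦ U(t)x continuous on (−∞, 0] and t ↦ V(t)x continuous on [0, ∞) for every x ∈ X, and with ‖U(t)‖ ≤ K₁·e^{a·t} for all t ≤ 0 and ‖V(t)‖ ≤ K₂·e^{b·t} for all t ≥ 0. Let F : (−∞, 0] → X be continuous with ‖F‖_{η} := sup_{t ≤ 0} e^{−η·t}·‖F(t)‖ < ∞. Then for every t ≤ 0 the function s ↦ V(t − s)·F(s) is Bochner integrable on (−∞, t], and the function (𝒦F)(t) := −∫_t^0 U(t − s)·F(s) ds + ∫_{−∞}^t V(t − s)·F(s) ds satisfies e^{−η·t}·‖(𝒦F)(t)‖ ≤ (K₁/(a − η) + K₂/(η − b))·‖F‖_{η} for all t ≤ 0. -/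

import Mathlib

open MeasureTheory Set Filter Real

lemma my_integral_exp_mul (c A B : ℝ) (hc : c ≠ 0) :
    ∫ x in A..B, Real.exp (c * x) = (Real.exp (c * B) - Real.exp (c * A)) / c := by
  have D : ∀ x : ℝ, HasDerivAt (fun y => Real.exp (c * y) / c) (Real.exp (c * x)) x := by
    intro x
    have h := ((Real.hasDerivAt_exp (c * x)).comp x ((hasDerivAt_id x).const_mul c)).div_const c
    simpa [mul_comm, mul_div_assoc, mul_div_cancel_left₀ _ hc] using h
  rw [intervalIntegral.integral_eq_sub_of_hasDerivAt (fun x _ => D x)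
    ((Real.continuous_exp.comp (continuous_const.mul continuous_id)).intervalIntegrable _ _)]
  ring

lemma my_intervalIntegrable_exp_mul (c A B : ℝ) :
    IntervalIntegrable (fun x => Real.exp (c * x)) volume A B :=
  (Real.continuous_exp.comp (continuous_const.mul continuous_id)).intervalIntegrable _ _

lemma my_integrableOn_exp_mul_Iic {c : ℝ} (hc : 0 < c) (T : ℝ) :
    IntegrableOn (fun s => Real.exp (c * s)) (Set.Iic T) := by
  refine integrableOn_Iic_of_intervalIntegral_norm_bounded (Real.exp (c * T) / c) T
    (fun y => ((my_intervalIntegrable_exp_mul c y T)).1) tendsto_id ?_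
  filter_upwards with y
  simp_rw [Real.norm_of_nonneg (Real.exp_pos _).le, my_integral_exp_mul c _ _ hc.ne']
  gcongr
  linarith [Real.exp_pos (c * y)]

lemma my_integral_exp_mul_Iic {c : ℝ} (hc : 0 < c) (T : ℝ) :
    ∫ s in Set.Iic T, Real.exp (c * s) = Real.exp (c * T) / c := by
  refine tendsto_nhds_unique
    (intervalIntegral_tendsto_integral_Iic T (my_integrableOn_exp_mul_Iic hc T) tendsto_id) ?_
  simp_rw [my_integral_exp_mul c _ _ hc.ne']
  have h1 : Tendsto (fun y : ℝ => Real.exp (c * y)) atBot (nhds 0) := by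
    apply Real.tendsto_exp_atBot.comp
    exact Tendsto.const_mul_atBot hc tendsto_id
  have h2 : Tendsto (fun y : ℝ => (Real.exp (c * T) - Real.exp (c * y)) / c) atBot
      (nhds ((Real.exp (c * T) - 0) / c)) := (tendsto_const_nhds.sub h1).div_const c
  simpa using h2

open MeasureTheory in
/-- Lemma C.2 of the paper: boundedness of the Lyapunov–Perron operator `𝒦` on the
weighted space `BC^{−η}((−∞,0]; X)`, with the explicit bound
`K₁/(a − η) + K₂/(η − b)` on its norm. -/
theorem lyapunov_perron_bounded {X : Type*} [NormedAddCommGroup X]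
    [NormedSpace ℝ X] [CompleteSpace X]
    (a b η K₁ K₂ : ℝ) (hbη : b < η) (hηa : η < a) (hK₁ : 0 < K₁) (hK₂ : 0 < K₂)
    (U V : ℝ → X →L[ℝ] X)
    (hUcont : ∀ x : X, ContinuousOn (fun t => U t x) (Set.Iic (0 : ℝ)))
    (hVcont : ∀ x : X, ContinuousOn (fun t => V t x) (Set.Ici (0 : ℝ)))
    (hUbound : ∀ t : ℝ, t ≤ 0 → ‖U t‖ ≤ K₁ * Real.exp (a * t))
    (hVbound : ∀ t : ℝ, 0 ≤ t → ‖V t‖ ≤ K₂ * Real.exp (b * t))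
    (F : ℝ → X) (hFcont : ContinuousOn F (Set.Iic (0 : ℝ)))
    (hFbdd : BddAbove ((fun t => Real.exp (-η * t) * ‖F t‖) '' Set.Iic (0 : ℝ))) :
    ∀ t : ℝ, t ≤ 0 →
      IntegrableOn (fun s => V (t - s) (F s)) (Set.Iic t) ∧
      Real.exp (-η * t) *
        ‖(-(∫ s in t..(0 : ℝ), U (t - s) (F s))) +
          ∫ s in Set.Iic t, V (t - s) (F s)‖ ≤
        (K₁ / (a - η) + K₂ / (η - b)) *
          sSup ((fun t => Real.exp (-η * t) * ‖F t‖) '' Set.Iic (0 : ℝ)) := by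
  intro t ht
  have haη : (0:ℝ) < a - η := by linarith
  have hηb : (0:ℝ) < η - b := by linarith
  set M : ℝ := sSup ((fun t => Real.exp (-η * t) * ‖F t‖) '' Set.Iic (0 : ℝ)) with hMdef
  have hMle : ∀ s : ℝ, s ≤ 0 → Real.exp (-η * s) * ‖F s‖ ≤ M :=
    fun s hs => le_csSup hFbdd ⟨s, hs, rfl⟩
  have hM0 : 0 ≤ M := le_trans (by positivity) (hMle 0 le_rfl)
  have hF : ∀ s : ℝ, s ≤ 0 → ‖F s‖ ≤ M * Real.exp (η * s) := by
    intro s hs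
    have h1 := hMle s hs
    have h2 : ‖F s‖ = (Real.exp (-η * s) * ‖F s‖) * Real.exp (η * s) := by
      rw [mul_assoc, mul_comm ‖F s‖, ← mul_assoc, ← Real.exp_add]
      simp
    rw [h2]
    exact mul_le_mul_of_nonneg_right h1 (Real.exp_pos _).le
  -- continuity of the V integrand on Iic t
  have hVFcont : ContinuousOn (fun s => V (t - s) (F s)) (Set.Iic t) := by
    intro s₀ hs₀
    have hts₀ : s₀ ≤ t := Set.mem_Iic.mp hs₀
    have hs₀0 : s₀ ≤ 0 := le_trans hts₀ ht
    have hmaps : Set.MapsTo (fun s => t - s) (Set.Iic t) (Set.Ici (0 : ℝ)) :=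
      fun s hs => show (0:ℝ) ≤ t - s by linarith [Set.mem_Iic.mp hs]
    have hsub : Tendsto (fun s => t - s) (nhdsWithin s₀ (Set.Iic t))
        (nhdsWithin (t - s₀) (Set.Ici (0 : ℝ))) :=
      ((continuous_const.sub continuous_id).continuousWithinAt).tendsto_nhdsWithin hmaps
    have hV0 : Tendsto (fun s => V (t - s) (F s₀)) (nhdsWithin s₀ (Set.Iic t))
        (nhds (V (t - s₀) (F s₀))) :=
      (hVcont (F s₀) (t - s₀) (Set.mem_Ici.mpr (by linarith))).tendsto.comp hsub
    have hFt : Tendsto F (nhdsWithin s₀ (Set.Iic t)) (nhds (F s₀)) :=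
      ((hFcont s₀ hs₀0).mono (Set.Iic_subset_Iic.mpr ht)).tendsto
    have hnorm1 : Tendsto (fun s => K₂ * Real.exp (b * (t - s)) * ‖F s - F s₀‖)
        (nhdsWithin s₀ (Set.Iic t)) (nhds (K₂ * Real.exp (b * (t - s₀)) * 0)) := by
      apply Tendsto.mul
      · have hc : Continuous fun s : ℝ => K₂ * Real.exp (b * (t - s)) :=
          continuous_const.mul (Real.continuous_exp.comp
            (continuous_const.mul (continuous_const.sub continuous_id)))
        exact hc.continuousAt.tendsto.mono_left nhdsWithin_le_nhds
      · have := (hFt.sub_const (F s₀)).norm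
        simpa using this
    have hnorm2 : Tendsto (fun s => ‖V (t - s) (F s₀) - V (t - s₀) (F s₀)‖)
        (nhdsWithin s₀ (Set.Iic t)) (nhds 0) := by
      have := (hV0.sub_const (V (t - s₀) (F s₀))).norm
      simpa using this
    have hg : Tendsto (fun s => K₂ * Real.exp (b * (t - s)) * ‖F s - F s₀‖ +
        ‖V (t - s) (F s₀) - V (t - s₀) (F s₀)‖) (nhdsWithin s₀ (Set.Iic t)) (nhds 0) := by
      have := hnorm1.add hnorm2
      simpa using this
    have key : Tendsto (fun s => V (t - s) (F s) - V (t - s₀) (F s₀))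
        (nhdsWithin s₀ (Set.Iic t)) (nhds 0) := by
      apply squeeze_zero_norm' ?_ hg
      filter_upwards [self_mem_nhdsWithin] with s hs
      have hdecomp : V (t - s) (F s) - V (t - s₀) (F s₀) =
          V (t - s) (F s - F s₀) + (V (t - s) (F s₀) - V (t - s₀) (F s₀)) := by
        rw [map_sub]; abel
      rw [hdecomp]
      refine (norm_add_le _ _).trans (add_le_add_left ?_ _)
      calc ‖V (t - s) (F s - F s₀)‖ ≤ ‖V (t - s)‖ * ‖F s - F s₀‖ :=
            (V (t - s)).le_opNorm _
        _ ≤ K₂ * Real.exp (b * (t - s)) * ‖F s - F s₀‖ :=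
            mul_le_mul_of_nonneg_right (hVbound (t - s) (by linarith [Set.mem_Iic.mp hs]))
              (norm_nonneg _)
    exact tendsto_sub_nhds_zero_iff.mp key
  -- dominating function for the V integrand
  have hdomV : ∀ s ∈ Set.Iic t, ‖V (t - s) (F s)‖ ≤
      K₂ * M * Real.exp (b * t) * Real.exp ((η - b) * s) := by
    intro s hs
    have hst : s ≤ t := Set.mem_Iic.mp hs
    have hs0 : s ≤ 0 := le_trans hst ht
    calc ‖V (t - s) (F s)‖ ≤ ‖V (t - s)‖ * ‖F s‖ := (V (t - s)).le_opNorm _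
      _ ≤ (K₂ * Real.exp (b * (t - s))) * (M * Real.exp (η * s)) := by
          apply mul_le_mul (hVbound _ (by linarith)) (hF s hs0) (norm_nonneg _)
          positivity
      _ = K₂ * M * Real.exp (b * t) * Real.exp ((η - b) * s) := by
          have e : Real.exp (b * (t - s)) * Real.exp (η * s) =
              Real.exp (b * t) * Real.exp ((η - b) * s) := by
            rw [← Real.exp_add, ← Real.exp_add]; ring_nf
          linear_combination (K₂ * M) * e
  have hgint : IntegrableOn (fun s => K₂ * M * Real.exp (b * t) * Real.exp ((η - b) * s))
      (Set.Iic t) :=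
    (my_integrableOn_exp_mul_Iic hηb t).const_mul _
  have hVFint : IntegrableOn (fun s => V (t - s) (F s)) (Set.Iic t) := by
    refine Integrable.mono' hgint (hVFcont.aestronglyMeasurable measurableSet_Iic) ?_
    filter_upwards [ae_restrict_mem measurableSet_Iic] with s hs
    exact hdomV s hs
  refine ⟨hVFint, ?_⟩
  -- bound on the Iic-integral
  have hB : ‖∫ s in Set.Iic t, V (t - s) (F s)‖ ≤ K₂ * M * Real.exp (η * t) / (η - b) := by
    have h1 : ‖∫ s in Set.Iic t, V (t - s) (F s)‖ ≤
        ∫ s in Set.Iic t, K₂ * M * Real.exp (b * t) * Real.exp ((η - b) * s) := by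
      refine norm_integral_le_of_norm_le hgint ?_
      filter_upwards [ae_restrict_mem measurableSet_Iic] with s hs
      exact hdomV s hs
    rw [integral_const_mul, my_integral_exp_mul_Iic hηb t] at h1
    refine h1.trans (le_of_eq ?_)
    have e : Real.exp (b * t) * Real.exp ((η - b) * t) = Real.exp (η * t) := by
      rw [← Real.exp_add]; ring_nf
    field_simp
    have e' : Real.exp (b * t) * Real.exp (t * (η - b)) = Real.exp (t * η) := by
      rw [← Real.exp_add]; ring_nf
    linear_combination M * e'
  -- continuity of the U integrand on [t, 0]
  have hUFcont : ContinuousOn (fun s => U (t - s) (F s)) (Set.Icc t 0) := by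
    intro s₀ hs₀
    obtain ⟨hts₀, hs₀0⟩ := hs₀
    have hmaps : Set.MapsTo (fun s => t - s) (Set.Icc t 0) (Set.Iic (0 : ℝ)) :=
      fun s hs => show t - s ≤ (0:ℝ) by linarith [hs.1]
    have hsub : Tendsto (fun s => t - s) (nhdsWithin s₀ (Set.Icc t 0))
        (nhdsWithin (t - s₀) (Set.Iic (0 : ℝ))) :=
      ((continuous_const.sub continuous_id).continuousWithinAt).tendsto_nhdsWithin hmaps
    have hU0 : Tendsto (fun s => U (t - s) (F s₀)) (nhdsWithin s₀ (Set.Icc t 0))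
        (nhds (U (t - s₀) (F s₀))) :=
      (hUcont (F s₀) (t - s₀) (Set.mem_Iic.mpr (by linarith))).tendsto.comp hsub
    have hFt : Tendsto F (nhdsWithin s₀ (Set.Icc t 0)) (nhds (F s₀)) :=
      ((hFcont s₀ hs₀0).mono (fun s hs => Set.mem_Iic.mpr hs.2)).tendsto
    have hnorm1 : Tendsto (fun s => K₁ * Real.exp (a * (t - s)) * ‖F s - F s₀‖)
        (nhdsWithin s₀ (Set.Icc t 0)) (nhds (K₁ * Real.exp (a * (t - s₀)) * 0)) := by
      apply Tendsto.mul
      · have hc : Continuous fun s : ℝ => K₁ * Real.exp (a * (t - s)) :=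
          continuous_const.mul (Real.continuous_exp.comp
            (continuous_const.mul (continuous_const.sub continuous_id)))
        exact hc.continuousAt.tendsto.mono_left nhdsWithin_le_nhds
      · have := (hFt.sub_const (F s₀)).norm
        simpa using this
    have hnorm2 : Tendsto (fun s => ‖U (t - s) (F s₀) - U (t - s₀) (F s₀)‖)
        (nhdsWithin s₀ (Set.Icc t 0)) (nhds 0) := by
      have := (hU0.sub_const (U (t - s₀) (F s₀))).norm
      simpa using this
    have hg : Tendsto (fun s => K₁ * Real.exp (a * (t - s)) * ‖F s - F s₀‖ +
        ‖U (t - s) (F s₀) - U (t - s₀) (F s₀)‖) (nhdsWithin s₀ (Set.Icc t 0)) (nhds 0) := by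
      have := hnorm1.add hnorm2
      simpa using this
    have key : Tendsto (fun s => U (t - s) (F s) - U (t - s₀) (F s₀))
        (nhdsWithin s₀ (Set.Icc t 0)) (nhds 0) := by
      apply squeeze_zero_norm' ?_ hg
      filter_upwards [self_mem_nhdsWithin] with s hs
      have hdecomp : U (t - s) (F s) - U (t - s₀) (F s₀) =
          U (t - s) (F s - F s₀) + (U (t - s) (F s₀) - U (t - s₀) (F s₀)) := by
        rw [map_sub]; abel
      rw [hdecomp]
      refine (norm_add_le _ _).trans (add_le_add_left ?_ _)
      calc ‖U (t - s) (F s - F s₀)‖ ≤ ‖U (t - s)‖ * ‖F s - F s₀‖ :=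
            (U (t - s)).le_opNorm _
        _ ≤ K₁ * Real.exp (a * (t - s)) * ‖F s - F s₀‖ :=
            mul_le_mul_of_nonneg_right (hUbound (t - s) (by linarith [hs.1]))
              (norm_nonneg _)
    exact tendsto_sub_nhds_zero_iff.mp key
  -- bound on the interval integral
  have hdomU : ∀ s ∈ Set.Ioc t 0, ‖U (t - s) (F s)‖ ≤
      K₁ * M * Real.exp (a * t) * Real.exp ((η - a) * s) := by
    intro s hs
    obtain ⟨hts, hs0⟩ := hs
    calc ‖U (t - s) (F s)‖ ≤ ‖U (t - s)‖ * ‖F s‖ := (U (t - s)).le_opNorm _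
      _ ≤ (K₁ * Real.exp (a * (t - s))) * (M * Real.exp (η * s)) := by
          apply mul_le_mul (hUbound _ (by linarith)) (hF s hs0) (norm_nonneg _)
          positivity
      _ = K₁ * M * Real.exp (a * t) * Real.exp ((η - a) * s) := by
          have e : Real.exp (a * (t - s)) * Real.exp (η * s) =
              Real.exp (a * t) * Real.exp ((η - a) * s) := by
            rw [← Real.exp_add, ← Real.exp_add]; ring_nf
          linear_combination (K₁ * M) * e
  have hA : ‖∫ s in t..(0:ℝ), U (t - s) (F s)‖ ≤
      K₁ * M * Real.exp (a * t) * ((Real.exp ((η - a) * t) - 1) / (a - η)) := by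
    have hgint' : IntervalIntegrable
        (fun s => K₁ * M * Real.exp (a * t) * Real.exp ((η - a) * s)) volume t 0 :=
      (my_intervalIntegrable_exp_mul (η - a) t 0).const_mul _
    have h1 := intervalIntegral.norm_integral_le_abs_of_norm_le (μ := volume)
      (f := fun s => U (t - s) (F s)) (a := t) (b := 0)
      ?_ hgint'
    · have hval : (∫ s in t..(0:ℝ), K₁ * M * Real.exp (a * t) * Real.exp ((η - a) * s)) =
          K₁ * M * Real.exp (a * t) * ((Real.exp ((η - a) * t) - 1) / (a - η)) := by
        rw [intervalIntegral.integral_const_mul, my_integral_exp_mul (η - a) t 0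
          (by linarith : η - a ≠ 0), mul_zero, Real.exp_zero]
        congr 1
        rw [div_eq_div_iff (ne_of_lt (by linarith : η - a < 0)) (ne_of_gt haη)]
        ring
      rw [hval] at h1
      refine h1.trans (le_of_eq (abs_of_nonneg ?_))
      have h2 : (1:ℝ) ≤ Real.exp ((η - a) * t) := by
        rw [show (1:ℝ) = Real.exp 0 by simp]
        apply Real.exp_le_exp.mpr
        nlinarith
      exact mul_nonneg (mul_nonneg (mul_nonneg hK₁.le hM0) (Real.exp_pos _).le)
        (div_nonneg (by linarith) haη.le)
    · rw [Set.uIoc_of_le ht]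
      filter_upwards [ae_restrict_mem measurableSet_Ioc] with s hs
      exact hdomU s hs
  -- put everything together
  have hsplit : Real.exp (-η * t) *
      ‖(-(∫ s in t..(0:ℝ), U (t - s) (F s))) + ∫ s in Set.Iic t, V (t - s) (F s)‖ ≤
      Real.exp (-η * t) * ‖∫ s in t..(0:ℝ), U (t - s) (F s)‖ +
      Real.exp (-η * t) * ‖∫ s in Set.Iic t, V (t - s) (F s)‖ := by
    rw [← mul_add]
    apply mul_le_mul_of_nonneg_left _ (Real.exp_pos _).le
    exact (norm_add_le _ _).trans (by rw [norm_neg])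
  refine hsplit.trans ?_
  have hAη : Real.exp (-η * t) * ‖∫ s in t..(0:ℝ), U (t - s) (F s)‖ ≤ K₁ / (a - η) * M := by
    have h1 := mul_le_mul_of_nonneg_left hA (Real.exp_pos (-η * t)).le
    refine h1.trans ?_
    have e3 : Real.exp (-η * t) * Real.exp (a * t) * (Real.exp ((η - a) * t) - 1) =
        1 - Real.exp ((a - η) * t) := by
      rw [mul_sub, mul_one, ← Real.exp_add, ← Real.exp_add,
        show -η * t + a * t + (η - a) * t = 0 by ring,
        show -η * t + a * t = (a - η) * t by ring, Real.exp_zero]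
    calc Real.exp (-η * t) * (K₁ * M * Real.exp (a * t) *
          ((Real.exp ((η - a) * t) - 1) / (a - η)))
        = K₁ * M * (Real.exp (-η * t) * Real.exp (a * t) *
          (Real.exp ((η - a) * t) - 1)) / (a - η) := by ring
      _ = K₁ * M * (1 - Real.exp ((a - η) * t)) / (a - η) := by rw [e3]
      _ ≤ K₁ * M * 1 / (a - η) := by
          gcongr
          nlinarith [(Real.exp_pos ((a - η) * t)).le]
      _ = K₁ / (a - η) * M := by ring
  have hBη : Real.exp (-η * t) * ‖∫ s in Set.Iic t, V (t - s) (F s)‖ ≤ K₂ / (η - b) * M := by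
    have h1 := mul_le_mul_of_nonneg_left hB (Real.exp_pos (-η * t)).le
    refine h1.trans (le_of_eq ?_)
    have e4 : Real.exp (-η * t) * Real.exp (η * t) = 1 := by
      rw [← Real.exp_add, show -η * t + η * t = 0 by ring, Real.exp_zero]
    rw [show Real.exp (-η * t) * (K₂ * M * Real.exp (η * t) / (η - b)) =
      (Real.exp (-η * t) * Real.exp (η * t)) * (K₂ * M / (η - b)) from by ring, e4, one_mul]
    ring
  calc Real.exp (-η * t) * ‖∫ s in t..(0:ℝ), U (t - s) (F s)‖ +
      Real.exp (-η * t) * ‖∫ s in Set.Iic t, V (t - s) (F s)‖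
      ≤ K₁ / (a - η) * M + K₂ / (η - b) * M := add_le_add hAη hBη
    _ = (K₁ / (a - η) + K₂ / (η - b)) * M := by ring
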